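/- Let n ≥ 2, let u be a point in a Euclidean space, and let τ be an (n−1)-simplex all of whose vertices lie at distance exactly 1 from u, such that the distance from u to the affine span of τ is strictly greater than 1/√2. If τ is completely well-centered (every face of τ with at least two vertices is well-centered), then the cone σ = u∗τ is a completely well-centered n-simplex: every face of σ with at least two vertices is well-centered. -/

import Mathlib

open scoped RealInnerProductSpace
open Finset

variable {E : Type*} [NormedAddCommGroup E] [InnerProductSpace ℝ E]

/-- A simplex is well-centered if its circumcenter is a strictly positive affine
combination of its vertices. -/
def Affine.Simplex.IsWellCentered {n : ℕ} (s : Affine.Simplex ℝ E n) : Prop :=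
  ∃ w : Fin (n + 1) → ℝ, (∑ i, w i) = 1 ∧ (∀ i, 0 < w i) ∧
    Finset.univ.affineCombination ℝ s.points w = s.circumcenter

/-- A simplex is completely well-centered if every face with at least two vertices
is well-centered. -/
def Affine.Simplex.IsCompletelyWellCentered {n : ℕ} (s : Affine.Simplex ℝ E n) : Prop :=
  ∀ (m : ℕ) (fs : Finset (Fin (n + 1))) (h : fs.card = (m + 1) + 1),
    (s.face h).IsWellCentered

/-- The cone over a simplex all of whose vertices are at distance 1 from the apex,
with the circumcenter of the base far from the apex, is well-centered provided the
base circumcenter is a positive combination of the base vertices. -/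
lemma cone_isWellCentered {k : ℕ} (u : E) (τ : Affine.Simplex ℝ E k)
    (hdist : ∀ i, dist (τ.points i) u = 1)
    (hd : 1 / Real.sqrt 2 < dist u τ.circumcenter)
    (hw : ∃ w : Fin (k + 1) → ℝ, (∑ i, w i) = 1 ∧ (∀ i, 0 < w i) ∧
      Finset.univ.affineCombination ℝ τ.points w = τ.circumcenter)
    (σ : Affine.Simplex ℝ E (k + 1)) (hσ : σ.points = Fin.cons u τ.points) :
    σ.IsWellCentered := by
  obtain ⟨w, hw1, hw2, hw3⟩ := hw
  set c := τ.circumcenter with hc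
  have hdd : dist u c = ‖u - c‖ := dist_eq_norm u c
  set d := ‖u - c‖ with hdef
  rw [hdd] at hd
  have hd0 : 0 < d := lt_of_le_of_lt (by positivity) hd
  have hproj : (↑(τ.orthogonalProjectionSpan u) : E) = c :=
    τ.orthogonalProjection_eq_circumcenter_of_dist_eq hdist
  have horth : ∀ i, ⟪u - c, τ.points i - c⟫ = 0 := by
    intro i
    have h1 : u - c ∈ (affineSpan ℝ (Set.range τ.points)).directionᗮ := by
      rw [← hproj, Affine.Simplex.orthogonalProjectionSpan]
      simpa using EuclideanGeometry.vsub_orthogonalProjection_mem_direction_orthogonal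
        (affineSpan ℝ (Set.range τ.points)) u
    have h2 : τ.points i - c ∈ (affineSpan ℝ (Set.range τ.points)).direction := by
      simpa using AffineSubspace.vsub_mem_direction
        (mem_affineSpan ℝ (Set.mem_range_self i)) τ.circumcenter_mem_affineSpan
    exact real_inner_comm (τ.points i - c) (u - c) ▸ h1 _ h2
  set r := τ.circumradius with hr
  have hrpt : ∀ i, ‖τ.points i - c‖ = r := by
    intro i
    rw [← dist_eq_norm]
    exact τ.dist_circumcenter_eq_circumradius i
  have hpyth : r ^ 2 + d ^ 2 = 1 := by
    have h1 : ‖τ.points 0 - u‖ ^ 2 = 1 := by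
      rw [← dist_eq_norm, hdist 0]; norm_num
    have h2 : τ.points 0 - u = (τ.points 0 - c) - (u - c) := by abel
    have h3 : ‖(τ.points 0 - c) - (u - c)‖ ^ 2 =
        ‖τ.points 0 - c‖ ^ 2 - 2 * ⟪τ.points 0 - c, u - c⟫ + ‖u - c‖ ^ 2 :=
      norm_sub_sq_real _ _
    rw [real_inner_comm, horth 0, hrpt 0] at h3
    rw [h2, h3] at h1
    linarith
  have hd2 : 1 / 2 < d ^ 2 := by
    have h1 : (1 / Real.sqrt 2) ^ 2 < d ^ 2 := by
      apply pow_lt_pow_left₀ hd (by positivity) two_ne_zero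
    rwa [div_pow, one_pow, Real.sq_sqrt (by norm_num : (0:ℝ) ≤ 2)] at h1
  set s := (2 * d ^ 2 - 1) / (2 * d ^ 2) with hs
  have hs0 : 0 < s := div_pos (by linarith) (by positivity)
  have hs1 : s < 1 := (div_lt_one (by positivity)).2 (by linarith)
  have hskey : s * (2 * d ^ 2) = 2 * d ^ 2 - 1 := by
    rw [hs, div_mul_cancel₀ _ (by positivity)]
  set z := s • (u - c) + c with hz
  set R := (1 - s) * d with hR
  have hR0 : 0 ≤ R := by
    apply mul_nonneg <;> [linarith; linarith]
  have hzu : dist z u = R := by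
    have h1 : z - u = (s - 1) • (u - c) := by
      rw [hz]; module
    rw [dist_eq_norm, h1, norm_smul, Real.norm_eq_abs, abs_of_nonpos (by linarith), hR]
    ring
  have hzp : ∀ i, dist z (τ.points i) = R := by
    intro i
    have h1 : z - τ.points i = s • (u - c) - (τ.points i - c) := by
      rw [hz]; module
    have h2 : ‖s • (u - c) - (τ.points i - c)‖ ^ 2 =
        ‖s • (u - c)‖ ^ 2 - 2 * ⟪s • (u - c), τ.points i - c⟫ + ‖τ.points i - c‖ ^ 2 :=
      norm_sub_sq_real _ _
    rw [real_inner_smul_left, horth i, norm_smul, Real.norm_eq_abs, hrpt i] at h2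
    have hsq : ‖z - τ.points i‖ ^ 2 = R ^ 2 := by
      rw [h1, h2, hR]
      have : |s| = s := abs_of_nonneg hs0.le
      rw [this]
      nlinarith [hpyth, hskey]
    rw [dist_eq_norm]
    have habs := (sq_eq_sq_iff_abs_eq_abs _ _).1 hsq
    rwa [abs_of_nonneg (norm_nonneg _), abs_of_nonneg hR0] at habs
  have hrange : Set.range τ.points ⊆ Set.range σ.points := by
    rintro x ⟨i, rfl⟩
    exact ⟨i.succ, by rw [hσ, Fin.cons_succ]⟩
  have hu : u ∈ affineSpan ℝ (Set.range σ.points) :=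
    mem_affineSpan ℝ ⟨0, by rw [hσ, Fin.cons_zero]⟩
  have hcs : c ∈ affineSpan ℝ (Set.range σ.points) :=
    affineSpan_mono ℝ hrange τ.circumcenter_mem_affineSpan
  have hzmem : z ∈ affineSpan ℝ (Set.range σ.points) := by
    have := AffineSubspace.smul_vsub_vadd_mem _ s hu hcs hcs
    simpa [vsub_eq_sub, vadd_eq_add, hz] using this
  have hzc : z = σ.circumcenter := by
    apply σ.eq_circumcenter_of_dist_eq hzmem (r := R)
    intro i
    induction i using Fin.cases with
    | zero => rw [hσ, Fin.cons_zero, dist_comm]; exact hzu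
    | succ j => rw [hσ, Fin.cons_succ, dist_comm]; exact hzp j
  refine ⟨Fin.cons s (fun i => (1 - s) * w i), ?_, ?_, ?_⟩
  · rw [Fin.sum_univ_succ, Fin.cons_zero]
    simp only [Fin.cons_succ]
    rw [← Finset.mul_sum, hw1]
    ring
  · intro i
    induction i using Fin.cases with
    | zero => simpa using hs0
    | succ j => simpa using mul_pos (by linarith) (hw2 j)
  · rw [← hzc]
    have hsum1 : (∑ i, Fin.cons s (fun i => (1 - s) * w i) i) = 1 := by
      rw [Fin.sum_univ_succ, Fin.cons_zero]
      simp only [Fin.cons_succ]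
      rw [← Finset.mul_sum, hw1]; ring
    rw [Finset.affineCombination_eq_weightedVSubOfPoint_vadd_of_sum_eq_one Finset.univ
      (Fin.cons s fun i => (1 - s) * w i) σ.points hsum1 c,
      Finset.weightedVSubOfPoint_apply]
    have hzero : (∑ i, w i • (τ.points i -ᵥ c)) = 0 := by
      have h0 := Finset.affineCombination_eq_weightedVSubOfPoint_vadd_of_sum_eq_one
        Finset.univ w τ.points hw1 c
      rw [hw3, eq_vadd_iff_vsub_eq, vsub_self] at h0
      rw [Finset.weightedVSubOfPoint_apply] at h0
      exact h0.symm
    rw [Fin.sum_univ_succ, hσ]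
    simp only [Fin.cons_succ, Fin.cons_zero]
    have hsplit : (∑ i : Fin (k + 1), ((1 - s) * w i) • (τ.points i -ᵥ c)) =
        (1 - s) • (∑ i, w i • (τ.points i -ᵥ c)) := by
      rw [Finset.smul_sum]
      exact Finset.sum_congr rfl fun i _ => (smul_smul _ _ _).symm
    rw [hsplit, hzero, smul_zero, add_zero, hz]
    simp [vsub_eq_sub, vadd_eq_add]

section Comb

variable {n : ℕ} (fs : Finset (Fin (n + 1)))

/-- The set of predecessors of nonzero elements of `fs`. -/
noncomputable def predSet : Finset (Fin n) := Finset.univ.filter (fun j => j.succ ∈ fs)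

lemma predSet_map : (predSet fs).map ⟨Fin.succ, Fin.succ_injective n⟩ = fs.erase 0 := by
  ext x
  simp only [Finset.mem_map, Finset.mem_erase, predSet, Finset.mem_filter, Finset.mem_univ,
    true_and, Function.Embedding.coeFn_mk]
  constructor
  · rintro ⟨j, hj, rfl⟩
    exact ⟨Fin.succ_ne_zero j, hj⟩
  · rintro ⟨hx0, hx⟩
    exact ⟨x.pred hx0, by simpa using hx, x.succ_pred hx0⟩

lemma predSet_card_of_not_mem (h0 : (0 : Fin (n + 1)) ∉ fs) :
    (predSet fs).card = fs.card := by
  have := congrArg Finset.card (predSet_map fs)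
  rwa [Finset.card_map, Finset.erase_eq_of_notMem h0] at this

lemma predSet_card_of_mem (h0 : (0 : Fin (n + 1)) ∈ fs) :
    (predSet fs).card + 1 = fs.card := by
  have := congrArg Finset.card (predSet_map fs)
  rw [Finset.card_map, Finset.card_erase_of_mem h0] at this
  have hpos : 0 < fs.card := Finset.card_pos.2 ⟨0, h0⟩
  omega

lemma mem_predSet {j : Fin n} : j ∈ predSet fs ↔ j.succ ∈ fs := by
  simp [predSet]

lemma orderEmbOfFin_of_not_mem {k : ℕ} (h0 : (0 : Fin (n + 1)) ∉ fs)
    (h : fs.card = k + 1) (h' : (predSet fs).card = k + 1) (i : Fin (k + 1)) :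
    fs.orderEmbOfFin h i = ((predSet fs).orderEmbOfFin h' i).succ := by
  have := Finset.orderEmbOfFin_unique h
    (f := fun i => ((predSet fs).orderEmbOfFin h' i).succ)
    (fun i => (mem_predSet fs).1 (Finset.orderEmbOfFin_mem _ h' i))
    (fun a b hab => Fin.succ_lt_succ_iff.2 (((predSet fs).orderEmbOfFin h').strictMono hab))
  exact (congrFun this i).symm

lemma orderEmbOfFin_of_mem {k : ℕ} (h0 : (0 : Fin (n + 1)) ∈ fs)
    (h : fs.card = k + 1 + 1) (h' : (predSet fs).card = k + 1) :
    (fun i => fs.orderEmbOfFin h i) =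
      Fin.cons 0 (fun i => ((predSet fs).orderEmbOfFin h' i).succ) := by
  refine (Finset.orderEmbOfFin_unique h (f := Fin.cons 0
    (fun i => ((predSet fs).orderEmbOfFin h' i).succ)) ?_ ?_).symm
  · intro x
    induction x using Fin.cases with
    | zero => simpa using h0
    | succ j =>
      simpa using (mem_predSet fs).1 (Finset.orderEmbOfFin_mem _ h' j)
  · rw [Fin.strictMono_iff_lt_succ]
    intro i
    induction i using Fin.cases with
    | zero =>
      simp only [Fin.castSucc_zero, Fin.cons_zero, Fin.cons_succ]
      exact Fin.succ_pos _
    | succ j =>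
      rw [← Fin.succ_castSucc]
      simp only [Fin.cons_succ]
      exact Fin.succ_lt_succ_iff.2
        (((predSet fs).orderEmbOfFin h').strictMono (Fin.castSucc_lt_succ (i := j)))

end Comb

/-- If all vertices of a completely well-centered `(n−1)`-simplex `τ` (`n ≥ 2`) lie at
distance `1` from `u`, and the distance from `u` to the affine span of `τ` exceeds
`1/√2`, then the cone `σ = u ∗ τ` is a completely well-centered `n`-simplex. -/
theorem cone_isCompletelyWellCentered_of_isosceles
    {m : ℕ} (u : E) (τ : Affine.Simplex ℝ E (m + 1))
    (hdist : ∀ i, dist (τ.points i) u = 1)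
    (hfar : 1 / Real.sqrt 2 <
      Metric.infDist u (affineSpan ℝ (Set.range τ.points) : Set E))
    (hτ : τ.IsCompletelyWellCentered) :
    ∀ σ : Affine.Simplex ℝ E (m + 2), σ.points = Fin.cons u τ.points →
      σ.IsCompletelyWellCentered := by
  intro σ hσ k fs h
  by_cases h0 : (0 : Fin (m + 3)) ∈ fs
  · -- face containing the apex: a cone over a face of τ
    have h' : (predSet fs).card = k + 1 := by
      have := predSet_card_of_mem fs h0; omega
    have hkey := orderEmbOfFin_of_mem fs h0 h h'
    have hface : (σ.face h).points = Fin.cons u ((τ.face h').points) := by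
      funext i
      induction i using Fin.cases with
      | zero =>
        rw [Affine.Simplex.face_points, congrFun hkey 0]
        simp [hσ]
      | succ j =>
        rw [Affine.Simplex.face_points, congrFun hkey j.succ]
        simp only [Fin.cons_succ]
        rw [hσ, Fin.cons_succ]
        rfl
    have hdist' : ∀ i, dist ((τ.face h').points i) u = 1 := by
      intro i
      rw [Affine.Simplex.face_points]
      exact hdist _
    have hd' : 1 / Real.sqrt 2 < dist u (τ.face h').circumcenter := by
      have hsub : Set.range (τ.face h').points ⊆ Set.range τ.points := by
        rintro x ⟨i, rfl⟩
        exact ⟨_, rfl⟩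
      have hmem : (τ.face h').circumcenter ∈ affineSpan ℝ (Set.range τ.points) :=
        affineSpan_mono ℝ hsub (τ.face h').circumcenter_mem_affineSpan
      exact lt_of_lt_of_le hfar (Metric.infDist_le_dist_of_mem hmem)
    have hw' : ∃ w : Fin (k + 1) → ℝ, (∑ i, w i) = 1 ∧ (∀ i, 0 < w i) ∧
        Finset.univ.affineCombination ℝ (τ.face h').points w = (τ.face h').circumcenter := by
      cases k with
      | zero =>
        refine ⟨fun _ => 1, by simp, fun _ => one_pos, ?_⟩
        rw [(τ.face h').circumcenter_eq_point 0]
        exact Finset.affineCombination_of_eq_one_of_eq_zero _ _ _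
          (Finset.mem_univ 0) rfl (by intro j _ hj; exact absurd (Fin.fin_one_eq_zero j) hj)
      | succ k' =>
        exact hτ k' (predSet fs) h'
    exact cone_isWellCentered u (τ.face h') hdist' hd' hw' (σ.face h) hface
  · -- face not containing the apex: a face of τ
    have h' : (predSet fs).card = k + 1 + 1 := by
      rw [predSet_card_of_not_mem fs h0]; exact h
    have hface : σ.face h = τ.face h' := by
      apply Affine.Simplex.ext
      intro i
      rw [Affine.Simplex.face_points, Affine.Simplex.face_points,
        orderEmbOfFin_of_not_mem fs h0 h h' i, hσ, Fin.cons_succ]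
    rw [hface]
    exact hτ k (predSet fs) h'
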